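/- Weighted quadratic upper bound for the augmented coupling term. Let H₁ := E_1 × ⋯ × E_n be the l²-product of real Hilbert spaces E_j (so ‖u‖² = Σ_{j=1}^n ‖u_j‖²), let H₂ be a real Hilbert space, K : H₁ → H₂ a continuous linear map with adjoint K*, y ∈ H₂ and ρ ≥ 0. Define ψ_ρ(x, r) := ⟨y, Kx − r⟩ + (ρ/2)·‖Kx − r‖². Let σ_1,…,σ_n > 0 and L̄ ≥ 0 satisfy ‖Ku‖² ≤ L̄·Σ_{j=1}^n σ_j·‖u_j‖² for all u ∈ H₁. Then for all x, x̂ ∈ H₁ and all r, r̂ ∈ H₂: ψ_ρ(x̂, r̂) ≤ ψ_ρ(x, r) + ⟨−y + ρ·(r − Kx), r̂ − r⟩ + ⟨K*(y + ρ·(Kx − r)), x̂ − x⟩ + ρ·‖r̂ − r‖² + ρ·L̄·Σ_{j=1}^n σ_j·‖x̂_j − x_j‖². -/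

import Mathlib

open scoped RealInnerProductSpace

noncomputable instance PiLp.instCompleteSpaceOfBlocks {n : ℕ} {E : Fin n → Type*}
    [∀ j, NormedAddCommGroup (E j)] [∀ j, CompleteSpace (E j)] :
    CompleteSpace (PiLp 2 E) :=
  by infer_instance

/-- Weighted quadratic upper bound for the augmented coupling term on an
`l²`-product of Hilbert spaces. -/
theorem augmented_coupling_quadratic_upper_bound {n : ℕ} {E : Fin n → Type*}
    [∀ j, NormedAddCommGroup (E j)] [∀ j, InnerProductSpace ℝ (E j)]
    [∀ j, CompleteSpace (E j)]
    {H₂ : Type*} [NormedAddCommGroup H₂] [InnerProductSpace ℝ H₂] [CompleteSpace H₂]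
    (K : PiLp 2 E →L[ℝ] H₂) (y : H₂) (ρ : ℝ) (hρ : 0 ≤ ρ)
    (ψ : PiLp 2 E → H₂ → ℝ)
    (hψ : ∀ x r, ψ x r = ⟪y, K x - r⟫ + ρ / 2 * ‖K x - r‖ ^ 2)
    (σ : Fin n → ℝ) (hσ : ∀ j, 0 < σ j) (L : ℝ) (hL : 0 ≤ L)
    (hK : ∀ u : PiLp 2 E, ‖K u‖ ^ 2 ≤ L * ∑ j, σ j * ‖u j‖ ^ 2) :
    ∀ (x xhat : PiLp 2 E) (r rhat : H₂),
      ψ xhat rhat ≤ ψ x r + ⟪-y + ρ • (r - K x), rhat - r⟫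
        + ⟪ContinuousLinearMap.adjoint K (y + ρ • (K x - r)), xhat - x⟫
        + ρ * ‖rhat - r‖ ^ 2 + ρ * L * ∑ j, σ j * ‖xhat j - x j‖ ^ 2 := by
  intro x xhat r rhat
  set a : H₂ := K x - r with ha
  set d : H₂ := K (xhat - x) - (rhat - r) with hd
  have hb : K xhat - rhat = a + d := by
    simp only [ha, hd, map_sub]; abel
  have hsum : ∑ j, σ j * ‖(xhat - x : PiLp 2 E) j‖ ^ 2
      = ∑ j, σ j * ‖xhat j - x j‖ ^ 2 := by
    refine Finset.sum_congr rfl fun j _ => ?_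
    congr 2
  have hdn : ‖d‖ ^ 2 ≤ 2 * ‖K (xhat - x)‖ ^ 2 + 2 * ‖rhat - r‖ ^ 2 := by
    have := norm_sub_sq_real (K (xhat - x)) (rhat - r)
    rw [hd, this]
    nlinarith [abs_real_inner_le_norm (K (xhat - x)) (rhat - r),
      abs_le.mp (abs_real_inner_le_norm (K (xhat - x)) (rhat - r)),
      sq_nonneg (‖K (xhat - x)‖ - ‖rhat - r‖)]
  have hKb : ‖K (xhat - x)‖ ^ 2 ≤ L * ∑ j, σ j * ‖xhat j - x j‖ ^ 2 := by
    have := hK (xhat - x)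
    rwa [hsum] at this
  have key : ρ / 2 * ‖d‖ ^ 2 ≤ ρ * ‖rhat - r‖ ^ 2
      + ρ * L * ∑ j, σ j * ‖xhat j - x j‖ ^ 2 := by
    nlinarith [hdn, hKb, sq_nonneg ‖rhat - r‖]
  have hlin : ⟪-y + ρ • (r - K x), rhat - r⟫
      + ⟪ContinuousLinearMap.adjoint K (y + ρ • (K x - r)), xhat - x⟫
      = ⟪y, d⟫ + ρ * ⟪a, d⟫ := by
    rw [ContinuousLinearMap.adjoint_inner_left]
    simp only [hd, ha, inner_add_left, inner_sub_right, inner_neg_left,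
      inner_smul_left, inner_sub_left, RCLike.conj_to_real]
    ring
  rw [hψ, hψ, hb, norm_add_sq_real]
  rw [inner_add_right]
  nlinarith [hlin, key]
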